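/- arXiv:1908.00092 — 8 statements merged into one kernel-verified Lean document; each statement's English description precedes it below -/
import Mathlib

section
/- Let r ≥ 2 and let F be an r-graph. There exists a constant C > 0 (depending only on F and r) such that for every positive integer n and every Berge-F-free hypergraph H on n vertices in which every hyperedge has size at least |V(F)|, we have ∑_{h ∈ E(H)} |h|^r ≤ C · n^r. -/
open Finset

/-- `H` contains (a subhypergraph which is) a Berge copy of `F`. -/
def ContainsBerge {α β : Type*} [DecidableEq α] [DecidableEq β]
    (F : Finset (Finset α)) (H : Finset (Finset β)) : Prop :=
  ∃ (φ : α → β) (f : Finset α → Finset β),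
    Function.Injective φ ∧ Set.InjOn f (F : Set (Finset α)) ∧
    (∀ e ∈ F, f e ∈ H) ∧ (∀ e ∈ F, e.image φ ⊆ f e)

/-- `G` contains a subhypergraph isomorphic to `F`. -/
def CopyIn {α β : Type*} [DecidableEq α] [DecidableEq β]
    (F : Finset (Finset α)) (G : Finset (Finset β)) : Prop :=
  ∃ φ : α → β, Function.Injective φ ∧ ∀ e ∈ F, e.image φ ∈ G

noncomputable def exBerge {α : Type*} [DecidableEq α] (r n : ℕ) (F : Finset (Finset α)) : ℕ :=
  sSup {m | ∃ H : Finset (Finset (Fin n)),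
    (∀ e ∈ H, e.card = r) ∧ ¬ ContainsBerge F H ∧ H.card = m}

noncomputable def exForb {α : Type*} [DecidableEq α] (r n : ℕ) (F : Finset (Finset α)) : ℕ :=
  sSup {m | ∃ H : Finset (Finset (Fin n)),
    (∀ e ∈ H, e.card = r) ∧ ¬ CopyIn F H ∧ H.card = m}

/-- number of `r`-sets of vertices all of whose `k`-subsets are edges of `G`,
i.e. the number of copies of the complete `k`-graph on `r` vertices in `G`. -/
def cliqueCount (k r : ℕ) {n : ℕ} (G : Finset (Finset (Fin n))) : ℕ :=
  (((Finset.univ : Finset (Fin n)).powersetCard r).filter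
    (fun S => ∀ e ∈ S.powersetCard k, e ∈ G)).card

noncomputable def exGenClique {α : Type*} [DecidableEq α] (k r n : ℕ)
    (F : Finset (Finset α)) : ℕ :=
  sSup {m | ∃ G : Finset (Finset (Fin n)),
    (∀ e ∈ G, e.card = k) ∧ ¬ CopyIn F G ∧ cliqueCount k r G = m}

/-- `k ≥ R^(r)(F,F)`: every 2-coloring of the `r`-subsets of a `k`-set has a
monochromatic copy of `F`. -/
def RamseyProp {α : Type*} [DecidableEq α] (k r : ℕ) (F : Finset (Finset α)) : Prop :=
  ∀ χ : Finset (Fin k) → Bool, ∃ c : Bool,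
    CopyIn F (((Finset.univ : Finset (Fin k)).powersetCard r).filter (fun e => χ e = c))

def rShadow {β : Type*} [DecidableEq β] (r : ℕ) (H : Finset (Finset β)) : Finset (Finset β) :=
  H.biUnion (fun h => h.powersetCard r)

/-- the `k`-uniform expansion of a graph: add `k-2` new distinct vertices to each edge. -/
def expansion {α : Type*} [DecidableEq α] (k : ℕ) (F0 : Finset (Finset α)) :
    Finset (Finset (α ⊕ Finset α × Fin (k - 2))) :=
  F0.image (fun e =>
    e.image Sum.inl ∪ (Finset.univ : Finset (Fin (k - 2))).image (fun i => Sum.inr (e, i)))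

/-- Turán hypergraph `T^r(n,q)`: partition `Fin n` into `q` parts (residues mod `q`),
edges are the `r`-sets meeting every part at most once. -/
def turanEdges (r n q : ℕ) : Finset (Finset (Fin n)) :=
  ((Finset.univ : Finset (Fin n)).powersetCard r).filter
    (fun S => ∀ u ∈ S, ∀ v ∈ S, (u : ℕ) % q = (v : ℕ) % q → u = v)

def Colorable2 {α : Type*} (F0 : Finset (Finset α)) (t : ℕ) : Prop :=
  ∃ c : α → Fin t, ∀ e ∈ F0, ∀ u ∈ e, ∀ v ∈ e, u ≠ v → c u ≠ c v

/-- number of subhypergraphs of `G` isomorphic to `F`. -/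
def copyCount {α β : Type*} [Fintype α] [DecidableEq α] [Fintype β] [DecidableEq β]
    (F : Finset (Finset α)) (G : Finset (Finset β)) : ℕ :=
  (G.powerset.filter (fun G' => ∃ φ : α → β, Function.Injective φ ∧
      G' = F.image (fun e => e.image φ))).card

lemma exists_injOn_pick {γ δ : Type*} [DecidableEq γ] [DecidableEq δ] [Nonempty δ]
    (s : Finset γ) (t : γ → Finset δ) (ht : ∀ e ∈ s, s.card ≤ (t e).card) :
    ∃ g : γ → δ, Set.InjOn g ↑s ∧ ∀ e ∈ s, g e ∈ t e := by
  induction s using Finset.cons_induction with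
  | empty => exact ⟨fun _ => Classical.ofNonempty, by simp, by simp⟩
  | cons a s' ha ih =>
    have ht' : ∀ e ∈ s', s'.card ≤ (t e).card := by
      intro e he
      have := ht e (Finset.mem_cons_of_mem he)
      rw [Finset.card_cons] at this; omega
    obtain ⟨g', hinj, hmem⟩ := ih ht'
    have hne : (t a \ s'.image g').Nonempty := by
      rw [← Finset.card_pos]
      have h1 : (s'.image g').card ≤ s'.card := Finset.card_image_le
      have h2 := ht a (Finset.mem_cons_self a s')
      rw [Finset.card_cons] at h2
      by_contra hcon
      have hcon' : t a \ s'.image g' = ∅ := by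
        rw [← Finset.not_nonempty_iff_eq_empty]
        intro hne; exact hcon (Finset.card_pos.2 hne)
      have := Finset.card_le_card (Finset.sdiff_eq_empty_iff_subset.1 hcon')
      omega
    obtain ⟨x, hx⟩ := hne
    rw [Finset.mem_sdiff] at hx
    refine ⟨Function.update g' a x, ?_, ?_⟩
    · intro p hp q hq hpq
      simp only [Finset.coe_cons, Set.mem_insert_iff, Finset.mem_coe] at hp hq
      rcases hp with rfl | hp <;> rcases hq with rfl | hq
      · rfl
      · exfalso
        rw [Function.update_self, Function.update_of_ne (by rintro rfl; exact ha hq)] at hpq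
        exact hx.2 (Finset.mem_image.2 ⟨q, hq, hpq.symm⟩)
      · exfalso
        rw [Function.update_self, Function.update_of_ne (by rintro rfl; exact ha hp)] at hpq
        exact hx.2 (Finset.mem_image.2 ⟨p, hp, hpq⟩)
      · rw [Function.update_of_ne (by rintro rfl; exact ha hp),
          Function.update_of_ne (by rintro rfl; exact ha hq)] at hpq
        exact hinj hp hq hpq
    · intro e he
      rcases Finset.mem_cons.1 he with rfl | he'
      · rw [Function.update_self]; exact hx.1
      · rw [Function.update_of_ne (by rintro rfl; exact ha he')]; exact hmem e he'

lemma card_superset_count {β : Type*} [DecidableEq β] {h S : Finset β} {k r : ℕ}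
    (hS : S ⊆ h) (hSr : S.card = r) (hrk : r ≤ k) :
    ((h.powersetCard k).filter (fun T => S ⊆ T)).card = (h.card - r).choose (k - r) := by
  have : ((h.powersetCard k).filter (fun T => S ⊆ T)).card
      = ((h \ S).powersetCard (k - r)).card := by
    apply Finset.card_bij' (fun T _ => T \ S) (fun U _ => U ∪ S)
    · intro T hT
      rw [Finset.mem_filter, Finset.mem_powersetCard] at hT
      rw [Finset.mem_powersetCard]
      constructor
      · exact Finset.sdiff_subset_sdiff hT.1.1 le_rfl
      · rw [Finset.card_sdiff_of_subset hT.2, hT.1.2, hSr]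
    · intro U hU
      rw [Finset.mem_powersetCard] at hU
      have hdisj : Disjoint U S := Finset.disjoint_of_subset_left hU.1 (Finset.sdiff_disjoint)
      rw [Finset.mem_filter, Finset.mem_powersetCard]
      refine ⟨⟨Finset.union_subset (hU.1.trans (Finset.sdiff_subset)) hS, ?_⟩,
        Finset.subset_union_right⟩
      rw [Finset.card_union_of_disjoint hdisj, hU.2, hSr]
      omega
    · intro T hT
      rw [Finset.mem_filter] at hT
      exact Finset.sdiff_union_of_subset hT.2
    · intro U hU
      rw [Finset.mem_powersetCard] at hU
      have hdisj : Disjoint U S := Finset.disjoint_of_subset_left hU.1 (Finset.sdiff_disjoint)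
      rw [Finset.union_sdiff_cancel_right hdisj]
  rw [this, Finset.card_powersetCard, Finset.card_sdiff_of_subset hS, hSr]

lemma pow_le_const_mul_choose {v r : ℕ} (hrv : r ≤ v) (hr : 1 ≤ r) :
    v ^ r ≤ r ^ r * (r.factorial * v.choose r) := by
  rw [← Nat.descFactorial_eq_factorial_mul_choose]
  have key : v ≤ r * (v + 1 - r) := by
    have h1 : v - r ≤ r * (v - r) := Nat.le_mul_of_pos_left _ hr
    calc v = (v - r) + r := (Nat.sub_add_cancel hrv).symm
      _ ≤ r * (v - r) + r := Nat.add_le_add_right h1 r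
      _ = r * ((v - r) + 1) := by ring
      _ = r * (v + 1 - r) := by congr 1; omega
  calc v ^ r ≤ (r * (v + 1 - r)) ^ r := Nat.pow_le_pow_left key r
    _ = r ^ r * (v + 1 - r) ^ r := mul_pow _ _ _
    _ ≤ r ^ r * v.descFactorial r :=
        Nat.mul_le_mul_left _ (Nat.pow_sub_le_descFactorial v r)

theorem statement0 {α : Type*} [Fintype α] [DecidableEq α] (r : ℕ) (hr : 2 ≤ r)
    (F : Finset (Finset α)) (hF : ∀ e ∈ F, e.card = r) :
    ∃ C : ℝ, 0 < C ∧ ∀ n : ℕ, 0 < n → ∀ H : Finset (Finset (Fin n)),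
      ¬ ContainsBerge F H →
      (∀ h ∈ H, Fintype.card α ≤ h.card) →
      ∑ h ∈ H, (h.card : ℝ) ^ r ≤ C * (n : ℝ) ^ r := by
  classical
  rcases Finset.eq_empty_or_nonempty F with rfl | ⟨e₀, he₀⟩
  · refine ⟨1, one_pos, ?_⟩
    intro n hn H hB hHk
    rcases Finset.eq_empty_or_nonempty H with rfl | ⟨h0, hh0⟩
    · simp only [Finset.sum_empty, one_mul]
      positivity
    · exfalso; apply hB
      have hkn : Fintype.card α ≤ Fintype.card (Fin n) := by
        rw [Fintype.card_fin]
        exact le_trans (hHk h0 hh0) (by simpa using Finset.card_le_univ h0)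
      obtain ⟨φ⟩ := Function.Embedding.nonempty_of_card_le hkn
      exact ⟨φ, fun _ => ∅, φ.injective, by simp, by simp, by simp⟩
  · have hrk : r ≤ Fintype.card α := by rw [← hF e₀ he₀]; exact Finset.card_le_univ e₀
    have hr1 : 1 ≤ r := by omega
    set m := F.card with hm
    set A : ℕ := r ^ r * r.factorial * (Fintype.card α).choose r * m with hA
    refine ⟨(A : ℝ) + 1, by positivity, ?_⟩
    intro n hn H hB hHk
    set d : Finset (Fin n) → ℕ := fun S => (H.filter (fun h => S ⊆ h)).card with hd
    set B : Finset (Fin n) → Finset (Finset (Fin n)) :=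
      fun h => (h.powersetCard r).filter (fun S => d S < m) with hBdef
    have claim1 : ∀ h ∈ H, ∀ T ∈ h.powersetCard (Fintype.card α),
        ∃ S ∈ T.powersetCard r, d S < m := by
      intro h hh T hT
      by_contra hcon
      push_neg at hcon
      rw [Finset.mem_powersetCard] at hT
      obtain ⟨φ, hφ⟩ := Function.Embedding.exists_of_card_le_finset (s := T)
        (by rw [hT.2])
      have himg : ∀ e ∈ F, e.image ⇑φ ∈ T.powersetCard r := by
        intro e he
        rw [Finset.mem_powersetCard]
        constructor
        · intro x hx
          rw [Finset.mem_image] at hx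
          obtain ⟨y, _, rfl⟩ := hx
          exact hφ ⟨y, rfl⟩
        · rw [Finset.card_image_of_injective _ φ.injective, hF e he]
      obtain ⟨g, ginj, gmem⟩ := exists_injOn_pick F
        (fun e => H.filter (fun h' => e.image ⇑φ ⊆ h'))
        (fun e he => hcon _ (himg e he))
      exact hB ⟨⇑φ, g, φ.injective, ginj,
        fun e he => (Finset.mem_filter.1 (gmem e he)).1,
        fun e he => (Finset.mem_filter.1 (gmem e he)).2⟩
    have claim2 : ∀ h ∈ H, h.card.choose r ≤ (Fintype.card α).choose r * (B h).card := by
      intro h hh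
      have hkv : Fintype.card α ≤ h.card := hHk h hh
      have hsub : h.powersetCard (Fintype.card α) ⊆
          (B h).biUnion (fun S =>
            (h.powersetCard (Fintype.card α)).filter (fun T => S ⊆ T)) := by
        intro T hT
        obtain ⟨S, hS, hdS⟩ := claim1 h hh T hT
        rw [Finset.mem_powersetCard] at hS
        rw [Finset.mem_biUnion]
        refine ⟨S, ?_, ?_⟩
        · simp only [hBdef, Finset.mem_filter, Finset.mem_powersetCard]
          exact ⟨⟨hS.1.trans (Finset.mem_powersetCard.1 hT).1, hS.2⟩, hdS⟩
        · rw [Finset.mem_filter]; exact ⟨hT, hS.1⟩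
      have hcard1 : h.card.choose (Fintype.card α)
          ≤ (B h).card * ((h.card - r).choose (Fintype.card α - r)) := by
        calc h.card.choose (Fintype.card α)
            = (h.powersetCard (Fintype.card α)).card := (Finset.card_powersetCard _ _).symm
          _ ≤ _ := Finset.card_le_card hsub
          _ ≤ ∑ S ∈ B h,
              ((h.powersetCard (Fintype.card α)).filter (fun T => S ⊆ T)).card :=
              Finset.card_biUnion_le
          _ = ∑ S ∈ B h, (h.card - r).choose (Fintype.card α - r) := by
              apply Finset.sum_congr rfl
              intro S hS
              have hS' := Finset.mem_powersetCard.1 (Finset.mem_filter.1 hS).1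
              exact card_superset_count hS'.1 hS'.2 hrk
          _ = (B h).card * ((h.card - r).choose (Fintype.card α - r)) := by
              rw [Finset.sum_const, smul_eq_mul]
      have hpos : 0 < (h.card - r).choose (Fintype.card α - r) := Nat.choose_pos (by omega)
      have hid := Nat.choose_mul (n := h.card) hrk
      have hkey : h.card.choose r * ((h.card - r).choose (Fintype.card α - r)) ≤
          ((Fintype.card α).choose r * (B h).card) *
            ((h.card - r).choose (Fintype.card α - r)) := by
        calc h.card.choose r * ((h.card - r).choose (Fintype.card α - r))
            = h.card.choose (Fintype.card α) * (Fintype.card α).choose r := hid.symm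
          _ ≤ ((B h).card * ((h.card - r).choose (Fintype.card α - r))) *
                (Fintype.card α).choose r :=
              Nat.mul_le_mul_right _ hcard1
          _ = ((Fintype.card α).choose r * (B h).card) *
                ((h.card - r).choose (Fintype.card α - r)) := by ring
      exact Nat.le_of_mul_le_mul_right hkey hpos
    set Bad : Finset (Finset (Fin n)) :=
      (Finset.univ.powersetCard r).filter (fun S => d S < m) with hBad
    have hBeq : ∀ h : Finset (Fin n), B h = Bad.filter (fun S => S ⊆ h) := by
      intro h
      ext S
      simp only [hBdef, hBad, Finset.mem_filter, Finset.mem_powersetCard,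
        Finset.subset_univ, true_and]
      tauto
    have claim3 : ∑ h ∈ H, (B h).card ≤ n.choose r * m := by
      have hswap : ∑ h ∈ H, (B h).card = ∑ S ∈ Bad, d S := by
        have e1 : ∀ h, (B h).card = ∑ S ∈ Bad, if S ⊆ h then 1 else 0 := by
          intro h
          rw [hBeq h, Finset.card_filter]
        rw [Finset.sum_congr rfl (fun h _ => e1 h), Finset.sum_comm]
        apply Finset.sum_congr rfl
        intro S hS
        simp only [hd]
        exact (Finset.card_filter _ _).symm
      rw [hswap]
      calc ∑ S ∈ Bad, d S ≤ ∑ S ∈ Bad, m := by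
            apply Finset.sum_le_sum
            intro S hS
            rw [hBad, Finset.mem_filter] at hS
            exact le_of_lt hS.2
        _ = Bad.card * m := by rw [Finset.sum_const, smul_eq_mul]
        _ ≤ n.choose r * m := by
            apply Nat.mul_le_mul_right
            calc Bad.card ≤ (Finset.univ.powersetCard r).card := Finset.card_filter_le _ _
              _ = n.choose r := by
                  rw [Finset.card_powersetCard, Finset.card_univ, Fintype.card_fin]
    have main : ∑ h ∈ H, h.card ^ r ≤ A * n ^ r := by
      calc ∑ h ∈ H, h.card ^ r
          ≤ ∑ h ∈ H, r ^ r * (r.factorial * h.card.choose r) := by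
            apply Finset.sum_le_sum
            intro h hh
            exact pow_le_const_mul_choose (le_trans hrk (hHk h hh)) hr1
        _ = r ^ r * r.factorial * ∑ h ∈ H, h.card.choose r := by
            rw [Finset.mul_sum]
            exact Finset.sum_congr rfl (fun h _ => by ring)
        _ ≤ r ^ r * r.factorial * ∑ h ∈ H, (Fintype.card α).choose r * (B h).card :=
            Nat.mul_le_mul_left _ (Finset.sum_le_sum claim2)
        _ = r ^ r * r.factorial * ((Fintype.card α).choose r * ∑ h ∈ H, (B h).card) := by
            simp only [Finset.mul_sum]
        _ ≤ r ^ r * r.factorial * ((Fintype.card α).choose r * (n.choose r * m)) :=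
            Nat.mul_le_mul_left _ (Nat.mul_le_mul_left _ claim3)
        _ ≤ r ^ r * r.factorial * ((Fintype.card α).choose r * (n ^ r * m)) :=
            Nat.mul_le_mul_left _ (Nat.mul_le_mul_left _
              (Nat.mul_le_mul_right _ (Nat.choose_le_pow _ _)))
        _ = A * n ^ r := by rw [hA]; ring
    have cast1 : ∑ h ∈ H, (h.card : ℝ) ^ r = ((∑ h ∈ H, h.card ^ r : ℕ) : ℝ) := by
      push_cast; ring
    rw [cast1]
    calc ((∑ h ∈ H, h.card ^ r : ℕ) : ℝ)
        ≤ ((A * n ^ r : ℕ) : ℝ) := by exact_mod_cast main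
      _ = (A : ℝ) * (n : ℝ) ^ r := by push_cast; ring
      _ ≤ ((A : ℝ) + 1) * (n : ℝ) ^ r := by
          apply mul_le_mul_of_nonneg_right _ (by positivity)
          linarith
end

section
/- For every k-graph F and all integers r ≥ k ≥ 2 and n ≥ 1, we have ex_k(n, K_r^(k), F) ≤ ex_r(n, Berge-F). -/
open Finset

theorem statement8 {α : Type*} [DecidableEq α] (k r n : ℕ) (hk : 2 ≤ k) (hkr : k ≤ r)
    (hn : 1 ≤ n) (F : Finset (Finset α)) (hF : ∀ e ∈ F, e.card = k) :
    exGenClique k r n F ≤ exBerge r n F := by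
  apply csSup_le'
  rintro m ⟨G, hGk, hGfree, hGcount⟩
  unfold cliqueCount at hGcount
  set H := ((Finset.univ : Finset (Fin n)).powersetCard r).filter
    (fun S => ∀ e ∈ S.powersetCard k, e ∈ G) with hH
  apply le_csSup
  · exact ⟨Fintype.card (Finset (Fin n)),
      fun x hx => by obtain ⟨H', _, _, hc⟩ := hx; exact hc ▸ Finset.card_le_univ H'⟩
  · refine ⟨H, ?_, ?_, hGcount⟩
    · intro e he
      simp only [hH, Finset.mem_filter, Finset.mem_powersetCard] at he
      exact he.1.2
    · rintro ⟨φ, f, hφ, hf, hfe, hsub⟩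
      apply hGfree
      refine ⟨φ, hφ, fun e he => ?_⟩
      have h1 := hfe e he
      simp only [hH, Finset.mem_filter] at h1
      apply h1.2
      rw [Finset.mem_powersetCard]
      exact ⟨hsub e he, by rw [Finset.card_image_of_injective _ hφ, hF e he]⟩
end

section
/- For every k-graph F and all integers r ≥ k ≥ 2 and n ≥ 1, we have ex_r(n, Berge-F) ≤ ex_k(n, K_r^(k), F) + ex_k(n, F), where ex_k(n, F) denotes the maximum number of hyperedges in an F-free k-graph on n vertices. -/
open Finset

lemma greedy_sel (k : ℕ) {n : ℕ} (H : Finset (Finset (Fin n))) :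
    ∃ (B : Finset (Finset (Fin n))) (sel : Finset (Fin n) → Finset (Fin n)),
      B ⊆ H ∧ Set.InjOn sel B ∧
      (∀ h ∈ B, sel h ⊆ h ∧ (sel h).card = k) ∧
      (∀ h ∈ H, h ∉ B → ∀ s ∈ h.powersetCard k, s ∈ B.image sel) := by
  classical
  induction H using Finset.induction_on with
  | empty => exact ⟨∅, id, by simp, by simp [Set.InjOn], by simp, by simp⟩
  | @insert a H ha ih =>
    obtain ⟨B, sel, hBH, hinj, hsel, hred⟩ := ih
    have haB : a ∉ B := fun h => ha (hBH h)
    by_cases hc : ∃ s ∈ a.powersetCard k, s ∉ B.image sel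
    · obtain ⟨s, hs, hsG⟩ := hc
      obtain ⟨hsa, hsk⟩ := Finset.mem_powersetCard.mp hs
      refine ⟨insert a B, fun x => if x = a then s else sel x, Finset.insert_subset_insert a hBH,
        ?_, ?_, ?_⟩
      · intro x hx y hy hxy
        simp only [Finset.coe_insert, Set.mem_insert_iff, Finset.mem_coe] at hx hy
        simp only [] at hxy
        by_cases hxa : x = a <;> by_cases hya : y = a
        · rw [hxa, hya]
        · exfalso
          have hy' : y ∈ B := hy.resolve_left hya
          rw [if_pos hxa, if_neg hya] at hxy
          exact hsG (hxy ▸ Finset.mem_image_of_mem sel hy')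
        · exfalso
          have hx' : x ∈ B := hx.resolve_left hxa
          rw [if_neg hxa, if_pos hya] at hxy
          exact hsG (hxy.symm ▸ Finset.mem_image_of_mem sel hx')
        · rw [if_neg hxa, if_neg hya] at hxy
          exact hinj (hx.resolve_left hxa) (hy.resolve_left hya) hxy
      · intro h hh
        rcases Finset.mem_insert.mp hh with rfl | hh
        · simp only [if_pos rfl]; exact ⟨hsa, hsk⟩
        · have hh' : h ≠ a := fun h' => haB (h' ▸ hh)
          simp only [if_neg hh']; exact hsel h hh
      · intro h hh hhB t ht
        have hh1 : h ≠ a := fun h' => hhB (h' ▸ Finset.mem_insert_self a B)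
        have hh2 : h ∈ H := (Finset.mem_insert.mp hh).resolve_left hh1
        have hh3 : h ∉ B := fun h' => hhB (Finset.mem_insert_of_mem h')
        obtain ⟨b, hb, hbt⟩ := Finset.mem_image.mp (hred h hh2 hh3 t ht)
        have hb' : b ≠ a := fun h' => haB (h' ▸ hb)
        refine Finset.mem_image.mpr ⟨b, Finset.mem_insert_of_mem hb, ?_⟩
        simp only [if_neg hb']; exact hbt
    · push_neg at hc
      refine ⟨B, sel, fun x hx => Finset.mem_insert_of_mem (hBH hx), hinj, hsel, ?_⟩
      intro h hh hhB t ht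
      rcases Finset.mem_insert.mp hh with rfl | hh
      · exact hc t ht
      · exact hred h hh hhB t ht

lemma main_bound {α : Type*} [DecidableEq α] (k r : ℕ) {n : ℕ} (F : Finset (Finset α))
    (H : Finset (Finset (Fin n))) (hH : ∀ e ∈ H, e.card = r)
    (hberge : ¬ ContainsBerge F H) :
    ∃ G : Finset (Finset (Fin n)), (∀ e ∈ G, e.card = k) ∧ ¬ CopyIn F G ∧
      H.card ≤ cliqueCount k r G + G.card := by
  classical
  obtain ⟨B, sel, hBH, hinj, hsel, hred⟩ := greedy_sel k H
  refine ⟨B.image sel, ?_, ?_, ?_⟩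
  · intro e he
    obtain ⟨b, hb, rfl⟩ := Finset.mem_image.mp he
    exact (hsel b hb).2
  · rintro ⟨φ, hφ, hcopy⟩
    apply hberge
    have h1 : ∀ e ∈ F, ∃ b, b ∈ B ∧ sel b = e.image φ :=
      fun e he => Finset.mem_image.mp (hcopy e he)
    choose! f hfB hfsel using h1
    refine ⟨φ, f, hφ, ?_, fun e he => hBH (hfB e he), fun e he => ?_⟩
    · intro e1 he1 e2 he2 heq
      rw [Finset.mem_coe] at he1 he2
      have h2 : e1.image φ = e2.image φ := by
        rw [← hfsel e1 he1, ← hfsel e2 he2, heq]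
      exact Finset.image_injective hφ h2
    · rw [← hfsel e he]
      exact (hsel (f e) (hfB e he)).1
  · have h1 : H \ B ⊆ ((Finset.univ : Finset (Fin n)).powersetCard r).filter
        (fun S => ∀ e ∈ S.powersetCard k, e ∈ B.image sel) := by
      intro h hh
      rw [Finset.mem_sdiff] at hh
      refine Finset.mem_filter.mpr ⟨Finset.mem_powersetCard.mpr
        ⟨Finset.subset_univ _, hH h hh.1⟩, fun t ht => hred h hh.1 hh.2 t ht⟩
    calc H.card = (H \ B).card + B.card := (Finset.card_sdiff_add_card_eq_card hBH).symm
      _ ≤ cliqueCount k r (B.image sel) + (B.image sel).card :=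
        Nat.add_le_add (Finset.card_le_card h1)
          (le_of_eq (Finset.card_image_of_injOn hinj).symm)

theorem statement9 {α : Type*} [DecidableEq α] (k r n : ℕ) (hk : 2 ≤ k) (hkr : k ≤ r)
    (hn : 1 ≤ n) (F : Finset (Finset α)) (hF : ∀ e ∈ F, e.card = k) :
    exBerge r n F ≤ exGenClique k r n F + exForb k n F := by
  classical
  apply csSup_le'
  rintro m ⟨H, hHr, hberge, rfl⟩
  obtain ⟨G, hGk, hGfree, hbound⟩ := main_bound k r F H hHr hberge
  refine hbound.trans (Nat.add_le_add ?_ ?_)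
  · apply le_csSup
    · refine ⟨((Finset.univ : Finset (Fin n)).powersetCard r).card, ?_⟩
      rintro m ⟨G', _, _, rfl⟩
      exact Finset.card_filter_le _ _
    · exact ⟨G, hGk, hGfree, rfl⟩
  · apply le_csSup
    · refine ⟨Fintype.card (Finset (Fin n)), ?_⟩
      rintro m ⟨G', _, _, rfl⟩
      exact Finset.card_le_univ _
    · exact ⟨G, hGk, hGfree, rfl⟩
end

section
/- Let F be an r-graph with at least one hyperedge and let H be a hypergraph. If the r-shadow Γ^(r)(H) contains a copy of F such that every r-edge of this copy is contained in at least |E(F)| hyperedges of H, then H contains a subhypergraph that is a Berge copy of F. -/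
open Finset

theorem statement13 {α β : Type*} [DecidableEq α] [DecidableEq β] (r : ℕ)
    (F : Finset (Finset α)) (hF : ∀ e ∈ F, e.card = r) (hFne : F.Nonempty)
    (H : Finset (Finset β))
    (hcopy : ∃ φ : α → β, Function.Injective φ ∧
      (∀ e ∈ F, e.image φ ∈ rShadow r H) ∧
      (∀ e ∈ F, F.card ≤ (H.filter (fun h => e.image φ ⊆ h)).card)) :
    ContainsBerge F H := by
  classical
  obtain ⟨φ, hinj, hshadow, hcard⟩ := hcopy
  set t : {e // e ∈ F} → Finset (Finset β) :=
    fun e => H.filter (fun h => (e : Finset α).image φ ⊆ h) with ht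
  have hall : ∀ s : Finset {e // e ∈ F}, s.card ≤ (s.biUnion t).card := by
    intro s
    rcases s.eq_empty_or_nonempty with rfl | ⟨e, he⟩
    · simp
    · calc s.card ≤ Fintype.card {e // e ∈ F} := Finset.card_le_univ s
        _ = F.card := Fintype.card_coe F
        _ ≤ (t e).card := hcard e.1 e.2
        _ ≤ (s.biUnion t).card :=
            Finset.card_le_card (Finset.subset_biUnion_of_mem t he)
  obtain ⟨f, finj, hf⟩ := (Finset.all_card_le_biUnion_card_iff_existsInjective' t).1 hall
  refine ⟨φ, fun e => if h : e ∈ F then f ⟨e, h⟩ else ∅, hinj, ?_, ?_, ?_⟩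
  · intro a ha b hb hab
    simp only [Finset.mem_coe] at ha hb
    simp only [dif_pos ha, dif_pos hb] at hab
    exact Subtype.ext_iff.1 (finj hab)
  · intro e he
    simp only [dif_pos he]
    exact (Finset.mem_filter.1 (hf ⟨e, he⟩)).1
  · intro e he
    simp only [dif_pos he]
    exact (Finset.mem_filter.1 (hf ⟨e, he⟩)).2
end

section
/- Let r ≥ 2 and let F be an r-graph with |V(F)| > r. There exists a constant α < 1, depending only on r and |V(F)|, such that for every Berge-F-free hypergraph H and every hyperedge h of H with |h| ≥ |V(F)|, at least (1−α)·binom(|h|, r) of the r-element subsets of h are contained in at most |E(F)|−1 hyperedges of H. -/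
open Finset

/-- number of `v`-subsets of `h` containing a fixed `e ⊆ h`. -/
lemma countSupersets {n : ℕ} (h e : Finset (Fin n)) (he : e ⊆ h) (v : ℕ)
    (hev : e.card ≤ v) :
    ((h.powersetCard v).filter (fun S => e ⊆ S)).card
      = (h.card - e.card).choose (v - e.card) := by
  rw [← Finset.card_sdiff_of_subset he, ← Finset.card_powersetCard]
  apply Finset.card_bij' (fun S _ => S \ e) (fun T _ => T ∪ e)
  · intro S hS
    simp only [mem_filter, mem_powersetCard] at hS
    simp only [mem_powersetCard]
    exact ⟨sdiff_subset_sdiff hS.1.1 le_rfl, by rw [card_sdiff_of_subset hS.2, hS.1.2]⟩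
  · intro T hT
    simp only [mem_powersetCard] at hT
    simp only [mem_filter, mem_powersetCard]
    refine ⟨⟨union_subset (hT.1.trans sdiff_subset) he, ?_⟩, subset_union_right⟩
    rw [card_union_of_disjoint (sdiff_disjoint.mono_left hT.1),
      hT.2, Nat.sub_add_cancel hev]
  · intro S hS
    simp only [mem_filter] at hS
    exact sdiff_union_of_subset hS.2
  · intro T hT
    simp only [mem_powersetCard] at hT
    exact union_sdiff_cancel_right (sdiff_disjoint.mono_left hT.1)

/-- If `S` is a `v`-set all of whose `r`-subsets are contained in at least `|F|`
edges of `H`, then `H` contains a Berge-`F`. -/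
lemma exists_poor {n v r : ℕ} (F : Finset (Finset (Fin v))) (hF : ∀ e ∈ F, e.card = r)
    (H : Finset (Finset (Fin n))) (hB : ¬ ContainsBerge F H)
    (S : Finset (Fin n)) (hS : S.card = v) :
    ∃ e ∈ S.powersetCard r, (H.filter (fun g => e ⊆ g)).card < F.card := by
  by_contra hco
  push_neg at hco
  apply hB
  set φ : Fin v → Fin n := fun i => (S.orderIsoOfFin hS i : Fin n) with hφ
  have hφinj : Function.Injective φ :=
    fun i j hij => (S.orderIsoOfFin hS).injective (Subtype.coe_injective hij)
  have hφmem : ∀ i, φ i ∈ S := fun i => (S.orderIsoOfFin hS i).2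
  have himg : ∀ e ∈ F, e.image φ ∈ S.powersetCard r := by
    intro e heF
    rw [mem_powersetCard]
    constructor
    · intro x hx
      simp only [mem_image] at hx
      obtain ⟨i, _, rfl⟩ := hx
      exact hφmem i
    · rw [Finset.card_image_of_injective _ hφinj, hF e heF]
  have key : ∀ G : Finset (Finset (Fin v)), G ⊆ F →
      ∃ f : Finset (Fin v) → Finset (Fin n), Set.InjOn f (G : Set (Finset (Fin v))) ∧
        (∀ e ∈ G, f e ∈ H) ∧ ∀ e ∈ G, e.image φ ⊆ f e := by
    intro G
    induction G using Finset.induction_on with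
    | empty => exact fun _ => ⟨fun _ => ∅, by simp [Set.InjOn], by simp, by simp⟩
    | @insert a G ha ih =>
      intro hsub
      obtain ⟨f, hfinj, hfH, hfsub⟩ := ih ((Finset.subset_insert a G).trans hsub)
      have haF : a ∈ F := hsub (mem_insert_self a G)
      have hT : F.card ≤ (H.filter (fun g => a.image φ ⊆ g)).card :=
        hco _ (himg a haF)
      have hlt : (G.image f).card < (H.filter (fun g => a.image φ ⊆ g)).card := by
        calc (G.image f).card ≤ G.card := Finset.card_image_le
          _ < F.card := Finset.card_lt_card
            (Finset.ssubset_of_ssubset_of_subset (Finset.ssubset_insert ha) hsub)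
          _ ≤ _ := hT
      have : ¬ (H.filter (fun g => a.image φ ⊆ g)) ⊆ G.image f :=
        fun hs => absurd (Finset.card_le_card hs) (by omega)
      obtain ⟨g, hgT, hgnot⟩ := Finset.not_subset.mp this
      simp only [mem_filter] at hgT
      refine ⟨Function.update f a g, ?_, ?_, ?_⟩
      · intro x hx y hy hxy
        simp only [coe_insert, Set.mem_insert_iff] at hx hy
        rcases hx with rfl | hx
        · rcases hy with rfl | hy
          · rfl
          · exfalso
            rw [Function.update_self, Function.update_of_ne (by rintro rfl; exact ha hy)]
              at hxy
            exact hgnot (Finset.mem_image.mpr ⟨y, hy, hxy.symm⟩)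
        · rcases hy with rfl | hy
          · exfalso
            rw [Function.update_self, Function.update_of_ne (by rintro rfl; exact ha hx)]
              at hxy
            exact hgnot (Finset.mem_image.mpr ⟨x, hx, hxy⟩)
          · rw [Function.update_of_ne (by rintro rfl; exact ha hx),
              Function.update_of_ne (by rintro rfl; exact ha hy)] at hxy
            exact hfinj hx hy hxy
      · intro e he
        rcases Finset.mem_insert.mp he with rfl | hem
        · rw [Function.update_self]; exact hgT.1
        · rw [Function.update_of_ne (by rintro rfl; exact ha hem)]; exact hfH e hem
      · intro e he
        rcases Finset.mem_insert.mp he with rfl | hem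
        · rw [Function.update_self]; exact hgT.2
        · rw [Function.update_of_ne (by rintro rfl; exact ha hem)]; exact hfsub e hem
  obtain ⟨f, h1, h2, h3⟩ := key F Finset.Subset.rfl
  exact ⟨φ, f, hφinj, h1, h2, h3⟩


theorem statement14 (r v : ℕ) (hr : 2 ≤ r) (hv : r < v) :
    ∃ a : ℝ, a < 1 ∧
      ∀ F : Finset (Finset (Fin v)), (∀ e ∈ F, e.card = r) →
      ∀ (n : ℕ) (H : Finset (Finset (Fin n))), ¬ ContainsBerge F H →
      ∀ h ∈ H, v ≤ h.card →
        (1 - a) * ((h.card.choose r : ℕ) : ℝ) ≤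
          (((h.powersetCard r).filter
            (fun e => (H.filter (fun g => e ⊆ g)).card < F.card)).card : ℝ) := by
  have hC : 0 < v.choose r := Nat.choose_pos hv.le
  have hCpos : (0:ℝ) < (v.choose r : ℝ) := by exact_mod_cast hC
  have h1C : (0:ℝ) < 1 / (v.choose r : ℝ) := by positivity
  refine ⟨1 - 1 / (v.choose r : ℝ), by linarith, ?_⟩
  intro F hF n H hB h hH hhcard
  set P := (h.powersetCard r).filter
    (fun e => (H.filter (fun g => e ⊆ g)).card < F.card) with hPdef
  suffices hkey : h.card.choose r ≤ P.card * v.choose r by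
    rw [sub_sub_cancel, one_div, inv_mul_eq_div, div_le_iff₀ hCpos]
    exact_mod_cast hkey
  have step1 : ∀ S ∈ h.powersetCard v, ∃ e ∈ P, e ⊆ S := by
    intro S hS
    rw [mem_powersetCard] at hS
    obtain ⟨e, he, hpoor⟩ := exists_poor F hF H hB S hS.2
    rw [mem_powersetCard] at he
    exact ⟨e, Finset.mem_filter.mpr
      ⟨mem_powersetCard.mpr ⟨he.1.trans hS.1, he.2⟩, hpoor⟩, he.1⟩
  have step2 : h.card.choose v ≤
      ∑ S ∈ h.powersetCard v, (P.filter (fun e => e ⊆ S)).card := by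
    rw [← Finset.card_powersetCard]
    calc (h.powersetCard v).card = ∑ _S ∈ h.powersetCard v, 1 := by
          rw [Finset.sum_const, smul_eq_mul, mul_one]
      _ ≤ _ := Finset.sum_le_sum (fun S hS => Finset.card_pos.mpr
          (let ⟨e, hP, hsub⟩ := step1 S hS; ⟨e, Finset.mem_filter.mpr ⟨hP, hsub⟩⟩))
  have step3 : ∑ S ∈ h.powersetCard v, (P.filter (fun e => e ⊆ S)).card
      = ∑ e ∈ P, ((h.powersetCard v).filter (fun S => e ⊆ S)).card := by
    simp_rw [Finset.card_filter]
    exact Finset.sum_comm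
  have step4 : ∀ e ∈ P, ((h.powersetCard v).filter (fun S => e ⊆ S)).card
      = (h.card - r).choose (v - r) := by
    intro e heP
    have he := (Finset.mem_filter.mp heP).1
    rw [mem_powersetCard] at he
    rw [countSupersets h e he.1 v (he.2 ▸ hv.le), he.2]
  have step5 : h.card.choose v ≤ P.card * (h.card - r).choose (v - r) := by
    calc h.card.choose v ≤ _ := step2
      _ = _ := step3
      _ = ∑ _e ∈ P, (h.card - r).choose (v - r) := Finset.sum_congr rfl step4
      _ = P.card * _ := by rw [Finset.sum_const, smul_eq_mul]
  have hid : h.card.choose v * v.choose r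
      = h.card.choose r * (h.card - r).choose (v - r) := Nat.choose_mul hv.le
  have hpos : 0 < (h.card - r).choose (v - r) := Nat.choose_pos (by omega)
  have h6 := Nat.mul_le_mul_right (v.choose r) step5
  rw [hid, mul_right_comm] at h6
  exact Nat.le_of_mul_le_mul_right h6 hpos
end

section
/- Let r ≥ 2 and let F be an r-graph. For every ε > 0 there exist δ > 0 and N such that for every n ≥ N and every Berge-F-free hypergraph H on n vertices whose hyperedges all have size at least |V(F)| and at most δ·n, the number of copies of F in the r-shadow Γ^(r)(H) is at most ε · n^{|V(F)|}. -/
open Finset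

lemma sdr_of_heavy {α β : Type*} [DecidableEq α] [DecidableEq β]
    (F : Finset (Finset α)) (H : Finset (Finset β)) (φ : α → β) :
    ∀ F' : Finset (Finset α), F' ⊆ F →
      (∀ e ∈ F', F.card ≤ (H.filter fun h => e.image φ ⊆ h).card) →
      ∃ f : Finset α → Finset β, Set.InjOn f (F' : Set (Finset α)) ∧
        ∀ e ∈ F', f e ∈ H ∧ e.image φ ⊆ f e := by
  classical
  intro F'
  induction F' using Finset.induction_on with
  | empty =>
    intro _ _
    exact ⟨fun _ => ∅, by simp, by simp⟩
  | @insert a s has ih =>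
    intro hsub hcard
    obtain ⟨f, hfinj, hf⟩ := ih ((subset_insert a s).trans hsub)
      (fun e he => hcard e (mem_insert_of_mem he))
    have hcardA : F.card ≤ (H.filter fun h => a.image φ ⊆ h).card :=
      hcard a (mem_insert_self a s)
    have hslt : s.card < F.card := by
      have h1 : (insert a s).card ≤ F.card := card_le_card hsub
      rw [card_insert_of_notMem has] at h1
      omega
    have himg : (s.image f).card ≤ s.card := card_image_le
    have hex : ∃ h ∈ H.filter (fun h => a.image φ ⊆ h), h ∉ s.image f := by
      by_contra hc
      push_neg at hc
      have hsub2 : H.filter (fun h => a.image φ ⊆ h) ⊆ s.image f := fun h hh => hc h hh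
      have := card_le_card hsub2
      omega
    obtain ⟨h0, hh0, hnot⟩ := hex
    rw [mem_filter] at hh0
    refine ⟨Function.update f a h0, ?_, ?_⟩
    · intro x hx y hy hxy
      simp only [coe_insert, Set.mem_insert_iff, mem_coe] at hx hy
      rcases hx with rfl | hx <;> rcases hy with rfl | hy
      · rfl
      · exfalso
        rw [Function.update_self, Function.update_of_ne (by rintro rfl; exact has hy)] at hxy
        exact hnot (hxy ▸ mem_image_of_mem f hy)
      · exfalso
        rw [Function.update_self, Function.update_of_ne (by rintro rfl; exact has hx)] at hxy
        exact hnot (hxy ▸ mem_image_of_mem f hx)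
      · rw [Function.update_of_ne (by rintro rfl; exact has hx),
          Function.update_of_ne (by rintro rfl; exact has hy)] at hxy
        exact hfinj hx hy hxy
    · intro e he
      rcases mem_insert.1 he with rfl | hes
      · rw [Function.update_self]
        exact ⟨hh0.1, hh0.2⟩
      · rw [Function.update_of_ne (by rintro rfl; exact has hes)]
        exact hf e hes

lemma sdr_or_pair {α β : Type*} [DecidableEq α] [DecidableEq β]
    (F : Finset (Finset α)) (H : Finset (Finset β)) (φ : α → β) :
    ∀ F' : Finset (Finset α), F' ⊆ F →
      (∀ e ∈ F', ∃ h ∈ H, e.image φ ⊆ h) →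
      (∃ f : Finset α → Finset β, Set.InjOn f (F' : Set (Finset α)) ∧
        ∀ e ∈ F', f e ∈ H ∧ e.image φ ⊆ f e) ∨
      (∃ e1 ∈ F, ∃ e2 ∈ F, e1 ≠ e2 ∧ ∃ h ∈ H, e1.image φ ⊆ h ∧ e2.image φ ⊆ h) := by
  classical
  intro F'
  induction F' using Finset.induction_on with
  | empty =>
    intro _ _
    exact Or.inl ⟨fun _ => ∅, by simp, by simp⟩
  | @insert a s has ih =>
    intro hsub hav
    rcases ih ((subset_insert a s).trans hsub)
      (fun e he => hav e (mem_insert_of_mem he)) with ⟨f, hfinj, hf⟩ | hpair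
    · by_cases hall : ∃ h ∈ H, a.image φ ⊆ h ∧ h ∉ s.image f
      · obtain ⟨h0, hh0, hs0, hnot⟩ := hall
        left
        refine ⟨Function.update f a h0, ?_, ?_⟩
        · intro x hx y hy hxy
          simp only [coe_insert, Set.mem_insert_iff, mem_coe] at hx hy
          rcases hx with rfl | hx <;> rcases hy with rfl | hy
          · rfl
          · exfalso
            rw [Function.update_self, Function.update_of_ne (by rintro rfl; exact has hy)] at hxy
            exact hnot (hxy ▸ mem_image_of_mem f hy)
          · exfalso
            rw [Function.update_self, Function.update_of_ne (by rintro rfl; exact has hx)] at hxy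
            exact hnot (hxy ▸ mem_image_of_mem f hx)
          · rw [Function.update_of_ne (by rintro rfl; exact has hx),
              Function.update_of_ne (by rintro rfl; exact has hy)] at hxy
            exact hfinj hx hy hxy
        · intro e he
          rcases mem_insert.1 he with rfl | hes
          · rw [Function.update_self]; exact ⟨hh0, hs0⟩
          · rw [Function.update_of_ne (by rintro rfl; exact has hes)]
            exact hf e hes
      · push_neg at hall
        obtain ⟨h0, hh0, hs0⟩ := hav a (mem_insert_self a s)
        obtain ⟨e2, he2, hfe2⟩ := mem_image.1 (hall h0 hh0 hs0)
        right
        refine ⟨a, hsub (mem_insert_self a s), e2,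
          hsub (mem_insert_of_mem he2), ?_, h0, hh0, hs0, ?_⟩
        · rintro rfl; exact has he2
        · rw [← hfe2]; exact (hf e2 he2).2
    · exact Or.inr hpair

lemma swap_count {n r : ℕ} (H : Finset (Finset (Fin n))) (P : Finset (Fin n) → Prop)
    [DecidablePred P] :
    ∑ h ∈ H, ((h.powersetCard r).filter P).card
      = ∑ g ∈ ((univ : Finset (Fin n)).powersetCard r).filter P,
          (H.filter fun h => g ⊆ h).card := by
  classical
  have step : ∀ h : Finset (Fin n), (h.powersetCard r).filter P =
      (((univ : Finset (Fin n)).powersetCard r).filter P).filter (fun g => g ⊆ h) := by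
    intro h
    ext g
    simp only [mem_filter, mem_powersetCard, subset_univ, true_and]
    tauto
  calc ∑ h ∈ H, ((h.powersetCard r).filter P).card
      = ∑ h ∈ H, ∑ g ∈ ((univ : Finset (Fin n)).powersetCard r).filter P,
          (if g ⊆ h then 1 else 0) := by
        refine Finset.sum_congr rfl (fun h _ => ?_)
        rw [step h, Finset.card_filter]
    _ = ∑ g ∈ ((univ : Finset (Fin n)).powersetCard r).filter P,
          ∑ h ∈ H, (if g ⊆ h then 1 else 0) := Finset.sum_comm
    _ = _ := by
        refine Finset.sum_congr rfl (fun g _ => ?_)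
        rw [Finset.card_filter]

lemma count_maps {α : Type*} [Fintype α] [DecidableEq α] {n : ℕ}
    (T0 : Finset α) (T : Finset (Fin n)) :
    ((univ : Finset (α → Fin n)).filter fun φ => ∀ x ∈ T0, φ x ∈ T).card
      ≤ T.card ^ T0.card * n ^ (Fintype.card α - T0.card) := by
  classical
  have heq : ((univ : Finset (α → Fin n)).filter fun φ => ∀ x ∈ T0, φ x ∈ T)
      = Fintype.piFinset (fun a => if a ∈ T0 then T else univ) := by
    ext φ
    simp only [mem_filter, mem_univ, true_and, Fintype.mem_piFinset]
    constructor
    · intro h a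
      by_cases ha : a ∈ T0
      · simpa [ha] using h a ha
      · simp [ha]
    · intro h x hx
      have := h x
      simpa [hx] using this
  rw [heq, Fintype.card_piFinset]
  rw [← Finset.prod_mul_prod_compl T0 (fun a => (if a ∈ T0 then T else univ).card)]
  have h1 : ∏ a ∈ T0, (if a ∈ T0 then T else (univ : Finset (Fin n))).card
      = T.card ^ T0.card := by
    rw [Finset.prod_congr rfl (fun a ha => by rw [if_pos ha])]
    exact Finset.prod_const _
  have h2 : ∏ a ∈ T0ᶜ, (if a ∈ T0 then T else (univ : Finset (Fin n))).card
      = n ^ (Fintype.card α - T0.card) := by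
    rw [Finset.prod_congr rfl (fun a ha => by rw [if_neg (mem_compl.1 ha)])]
    rw [Finset.prod_const, card_compl]
    simp
  rw [h1, h2]

theorem statement15 {α : Type*} [Fintype α] [DecidableEq α] (r : ℕ) (hr : 2 ≤ r)
    (F : Finset (Finset α)) (hF : ∀ e ∈ F, e.card = r) :
    ∀ ε : ℝ, 0 < ε → ∃ δ : ℝ, 0 < δ ∧ ∃ N : ℕ, ∀ n ≥ N, ∀ H : Finset (Finset (Fin n)),
      ¬ ContainsBerge F H →
      (∀ h ∈ H, Fintype.card α ≤ h.card ∧ (h.card : ℝ) ≤ δ * n) →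
      (copyCount F (rShadow r H) : ℝ) ≤ ε * (n : ℝ) ^ (Fintype.card α) := by
  classical
  intro ε hε
  set k := Fintype.card α with hkdef
  set m := F.card with hmdef
  set C1 : ℕ := m ^ 3 * (r + 1) ^ (r + 1) * k.choose r with hC1
  set δ : ℝ := ε / (C1 + 1) with hδ
  have hδpos : 0 < δ := by
    rw [hδ]; positivity
  refine ⟨δ, hδpos, 1, ?_⟩
  intro n hn H hfree hsize
  have hn1 : (1 : ℕ) ≤ n := hn
  -- membership in rShadow gives containing hyperedge
  have hsh : ∀ (j : ℕ) (T : Finset (Fin n)), T ∈ rShadow j H ↔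
      ∃ h ∈ H, T ⊆ h ∧ T.card = j := by
    intro j T
    unfold rShadow
    simp [mem_biUnion, mem_powersetCard]
  -- every counted G' has all F-edge-images in the shadow
  have hcopyφ : ∀ φ : α → Fin n, Function.Injective φ →
      (∀ e ∈ F, e.image φ ∈ rShadow r H) →
      ∃ e1 ∈ F, ∃ e2 ∈ F, e1 ≠ e2 ∧ ∃ h ∈ H, (e1 ∪ e2).image φ ⊆ h := by
    intro φ hinj hmem
    have hav : ∀ e ∈ F, ∃ h ∈ H, e.image φ ⊆ h := by
      intro e he
      obtain ⟨h, hh, hsub, -⟩ := (hsh r (e.image φ)).1 (hmem e he)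
      exact ⟨h, hh, hsub⟩
    rcases sdr_or_pair F H φ F subset_rfl hav with ⟨f, hfinj, hf⟩ | ⟨e1, he1, e2, he2, hne, h, hh, h1, h2⟩
    · exact absurd ⟨φ, f, hinj, hfinj, fun e he => (hf e he).1, fun e he => (hf e he).2⟩ hfree
    · refine ⟨e1, he1, e2, he2, hne, h, hh, ?_⟩
      rw [image_union]
      exact union_subset h1 h2
  -- the bad set of maps
  set Bad : Finset (α → Fin n) := univ.filter (fun φ => Function.Injective φ ∧
    ∃ e1 ∈ F, ∃ e2 ∈ F, e1 ≠ e2 ∧ ∃ h ∈ H, (e1 ∪ e2).image φ ⊆ h) with hBadDef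
  -- Step 1 : copyCount ≤ Bad.card
  have step1 : copyCount F (rShadow r H) ≤ Bad.card := by
    unfold copyCount
    set d : Fin n := ⟨0, by omega⟩
    set cw : Finset (Finset (Fin n)) → (α → Fin n) := fun G' =>
      if hG : ∃ φ : α → Fin n, Function.Injective φ ∧ G' = F.image (fun e => e.image φ)
      then hG.choose else (fun _ => d) with hcw
    apply card_le_card_of_injOn cw
    · intro G' hG'
      rw [mem_coe, mem_filter] at hG'
      obtain ⟨hpow, hex⟩ := hG'
      have hspec := hex.choose_spec
      rw [hcw]
      simp only [dif_pos hex]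
      set φ := hex.choose
      obtain ⟨hinj, hEq⟩ := hspec
      have hmem : ∀ e ∈ F, e.image φ ∈ rShadow r H := by
        intro e he
        have h1 : e.image φ ∈ G' := by
          rw [hEq]; exact mem_image_of_mem _ he
        exact (mem_powerset.1 hpow) h1
      rw [hBadDef, mem_coe, mem_filter]
      exact ⟨mem_univ _, hinj, hcopyφ φ hinj hmem⟩
    · intro G1 hG1 G2 hG2 hcc
      rw [mem_coe, mem_filter] at hG1 hG2
      obtain ⟨-, hex1⟩ := hG1
      obtain ⟨-, hex2⟩ := hG2
      rw [hcw] at hcc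
      simp only [dif_pos hex1, dif_pos hex2] at hcc
      have h1 := hex1.choose_spec.2
      have h2 := hex2.choose_spec.2
      rw [h1, h2, hcc]
  -- case: no two distinct edges in F
  by_cases hpair : ∃ e1 ∈ F, ∃ e2 ∈ F, e1 ≠ e2
  case neg =>
    have hBadEmpty : Bad = ∅ := by
      rw [hBadDef, Finset.filter_eq_empty_iff]
      rintro φ - ⟨-, e1, he1, e2, he2, hne, -⟩
      exact hpair ⟨e1, he1, e2, he2, hne⟩
    have h0 : copyCount F (rShadow r H) = 0 := by
      have := step1
      rw [hBadEmpty] at this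
      simpa using this
    rw [h0, Nat.cast_zero]
    positivity
  case pos =>
  obtain ⟨e1s, he1s, e2s, he2s, hnes⟩ := hpair
  -- k ≥ r + 1
  have hunion_card : ∀ e1 ∈ F, ∀ e2 ∈ F, e1 ≠ e2 → r + 1 ≤ (e1 ∪ e2).card := by
    intro e1 he1 e2 he2 hne
    by_contra hc
    push_neg at hc
    have h1 : (e1 ∪ e2).card ≤ r := by omega
    have he1c := hF e1 he1
    have he2c := hF e2 he2
    have hs1 : e1 = e1 ∪ e2 := Finset.eq_of_subset_of_card_le subset_union_left (by omega)
    have hs2 : e2 = e1 ∪ e2 := Finset.eq_of_subset_of_card_le subset_union_right (by omega)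
    exact hne (hs1.trans hs2.symm)
  have hrk : r + 1 ≤ k := by
    calc r + 1 ≤ (e1s ∪ e2s).card := hunion_card e1s he1s e2s he2s hnes
      _ ≤ (univ : Finset α).card := card_le_card (subset_univ _)
      _ = k := card_univ
  -- basic objects
  set PR : Finset (Finset (Fin n)) := (univ : Finset (Fin n)).powersetCard r with hPR
  set mult : Finset (Fin n) → ℕ := fun g => (H.filter fun h => g ⊆ h).card with hmult
  set G2 : Finset (Finset (Fin n)) := rShadow (r + 1) H with hG2def
  -- every k-subset of a hyperedge contains a light r-set
  have hlight : ∀ h ∈ H, ∀ K : Finset (Fin n), K ⊆ h → K.card = k →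
      ∃ g, g ⊆ K ∧ g.card = r ∧ mult g < m := by
    intro h hh K hKh hKcard
    by_contra hcon
    push_neg at hcon
    have hcard_le : Fintype.card α ≤ Fintype.card (↥K) := by
      rw [Fintype.card_coe, hKcard]
    obtain ⟨emb⟩ := Function.Embedding.nonempty_of_card_le hcard_le
    set ψ : α → Fin n := fun x => (emb x : Fin n) with hψ
    have hψinj : Function.Injective ψ :=
      fun x y hxy => emb.injective (Subtype.val_injective hxy)
    have hheavy : ∀ e ∈ F, F.card ≤ (H.filter fun h' => e.image ψ ⊆ h').card := by
      intro e he
      have hsubK : e.image ψ ⊆ K := by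
        intro x hx
        obtain ⟨y, -, rfl⟩ := mem_image.1 hx
        exact (emb y).2
      have hcard : (e.image ψ).card = r := by
        rw [card_image_of_injective _ hψinj, hF e he]
      exact hcon (e.image ψ) hsubK hcard
    obtain ⟨f, hfinj, hf⟩ := sdr_of_heavy F H ψ F subset_rfl hheavy
    exact hfree ⟨ψ, f, hψinj, hfinj, fun e he => (hf e he).1, fun e he => (hf e he).2⟩
  -- Turán-type bound inside each hyperedge
  have hD : ∀ h ∈ H, (h.card).choose r ≤
      k.choose r * ((h.powersetCard r).filter fun g => mult g < m).card := by
    intro h hh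
    have hkh : k ≤ h.card := (hsize h hh).1
    set L := (h.powersetCard r).filter (fun g => mult g < m) with hLdef
    set c : Finset (Fin n) → Finset (Fin n) := fun K =>
      if hK : ∃ g, g ⊆ K ∧ g.card = r ∧ mult g < m then hK.choose else ∅ with hc
    have hcspec : ∀ K ∈ h.powersetCard k, c K ⊆ K ∧ (c K).card = r ∧ mult (c K) < m := by
      intro K hK
      rw [mem_powersetCard] at hK
      have hex := hlight h hh K hK.1 hK.2
      rw [hc]
      simp only [dif_pos hex]
      exact hex.choose_spec
    set c0 := (h.card - r).choose (k - r) with hc0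
    have hc0pos : 0 < c0 := Nat.choose_pos (by omega)
    have himg : (h.powersetCard k).image c ⊆ L := by
      intro g hg
      obtain ⟨K, hK, rfl⟩ := mem_image.1 hg
      obtain ⟨hsub, hcard, hlt⟩ := hcspec K hK
      have hKh : K ⊆ h := (mem_powersetCard.1 hK).1
      rw [hLdef, mem_filter, mem_powersetCard]
      exact ⟨⟨hsub.trans hKh, hcard⟩, hlt⟩
    have h1 : (h.powersetCard k).card ≤ c0 * ((h.powersetCard k).image c).card := by
      apply card_le_mul_card_image
      intro g hg
      obtain ⟨K0, hK0, hK0c⟩ := mem_image.1 hg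
      have hg_spec := hcspec K0 hK0
      have hgsub_h : g ⊆ h := by
        rw [← hK0c]
        exact (hg_spec.1).trans (mem_powersetCard.1 hK0).1
      have hgcard : g.card = r := by rw [← hK0c]; exact hg_spec.2.1
      -- fiber injects into (h \ g).powersetCard (k - r)
      have hmaps : ∀ K ∈ (h.powersetCard k).filter (fun K => c K = g),
          K \ g ∈ (h \ g).powersetCard (k - r) := by
        intro K hK
        rw [mem_filter] at hK
        obtain ⟨hKmem, hKc⟩ := hK
        have hspecK := hcspec K hKmem
        have hgK : g ⊆ K := hKc ▸ hspecK.1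
        rw [mem_powersetCard]
        constructor
        · exact sdiff_subset_sdiff (mem_powersetCard.1 hKmem).1 subset_rfl
        · rw [card_sdiff_of_subset hgK, hgcard, (mem_powersetCard.1 hKmem).2]
      have hinj2 : Set.InjOn (fun K => K \ g)
          ↑((h.powersetCard k).filter (fun K => c K = g)) := by
        intro K1 hK1 K2 hK2 hK12
        rw [mem_coe, mem_filter] at hK1 hK2
        have hg1 : g ⊆ K1 := hK1.2 ▸ (hcspec K1 hK1.1).1
        have hg2 : g ⊆ K2 := hK2.2 ▸ (hcspec K2 hK2.1).1
        have e1' : K1 \ g ∪ g = K1 := sdiff_union_of_subset hg1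
        have e2' : K2 \ g ∪ g = K2 := sdiff_union_of_subset hg2
        rw [← e1', ← e2']
        exact congrArg (· ∪ g) hK12
      calc ((h.powersetCard k).filter (fun K => c K = g)).card
          ≤ ((h \ g).powersetCard (k - r)).card :=
            card_le_card_of_injOn _ hmaps hinj2
        _ = (h \ g).card.choose (k - r) := card_powersetCard _ _
        _ = c0 := by rw [card_sdiff_of_subset hgsub_h, hgcard]
    rw [card_powersetCard] at h1
    have h2 : ((h.powersetCard k).image c).card ≤ L.card := card_le_card himg
    have key : h.card.choose r * c0 ≤ (k.choose r * L.card) * c0 := by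
      calc h.card.choose r * c0 = h.card.choose k * k.choose r := by
            rw [hc0, (Nat.choose_mul (n := h.card) (k := k) (s := r) (by omega))]
        _ ≤ (c0 * L.card) * k.choose r := by
            apply Nat.mul_le_mul_right
            calc h.card.choose k ≤ c0 * ((h.powersetCard k).image c).card := h1
              _ ≤ c0 * L.card := Nat.mul_le_mul_left _ h2
        _ = (k.choose r * L.card) * c0 := by ring
    exact Nat.le_of_mul_le_mul_right key hc0pos
  -- total incidence bound
  have hIbound : ∑ g ∈ PR, mult g ≤ k.choose r * (m * n ^ r) := by
    have e1 : ∑ g ∈ PR, mult g = ∑ h ∈ H, (h.powersetCard r).card := by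
      have hsw := swap_count (r := r) H (fun _ => True)
      simp only [filter_true] at hsw
      rw [hPR]
      exact hsw.symm
    calc ∑ g ∈ PR, mult g = ∑ h ∈ H, (h.powersetCard r).card := e1
      _ = ∑ h ∈ H, (h.card).choose r :=
          Finset.sum_congr rfl fun h _ => card_powersetCard _ _
      _ ≤ ∑ h ∈ H, k.choose r * ((h.powersetCard r).filter fun g => mult g < m).card :=
          Finset.sum_le_sum hD
      _ = k.choose r * ∑ h ∈ H, ((h.powersetCard r).filter fun g => mult g < m).card := by
          rw [Finset.mul_sum]
      _ = k.choose r * ∑ g ∈ PR.filter (fun g => mult g < m), mult g := by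
          rw [swap_count H (fun g => mult g < m), hPR]
      _ ≤ k.choose r * ∑ _g ∈ PR.filter (fun g => mult g < m), m := by
          apply Nat.mul_le_mul_left
          exact Finset.sum_le_sum fun g hg => le_of_lt (mem_filter.1 hg).2
      _ = k.choose r * ((PR.filter (fun g => mult g < m)).card * m) := by
          rw [Finset.sum_const, smul_eq_mul]
      _ ≤ k.choose r * (n ^ r * m) := by
          apply Nat.mul_le_mul_left
          apply Nat.mul_le_mul_right
          calc (PR.filter (fun g => mult g < m)).card ≤ PR.card :=
                card_le_card (filter_subset _ _)
            _ = n.choose r := by rw [hPR, card_powersetCard, card_univ, Fintype.card_fin]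
            _ ≤ n ^ r := Nat.choose_le_pow _ _
      _ = k.choose r * (m * n ^ r) := by ring
  -- bound on the (r+1)-shadow
  have hG2card : G2.card ≤ ∑ g ∈ PR, ∑ h ∈ H.filter (fun h => g ⊆ h), h.card := by
    set d : Fin n := ⟨0, by omega⟩ with hd
    set pick : Finset (Fin n) → Fin n := fun T => if hT : T.Nonempty then T.min' hT else d
      with hpick
    have hpickmem : ∀ T : Finset (Fin n), T.Nonempty → pick T ∈ T := by
      intro T hT
      rw [hpick]
      simp only [dif_pos hT]
      exact T.min'_mem hT
    have hmaps : ∀ T ∈ G2, (⟨T.erase (pick T), pick T⟩ : Σ _ : Finset (Fin n), Fin n) ∈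
        PR.sigma (fun g => (H.filter fun h => g ⊆ h).biUnion id) := by
      intro T hT
      obtain ⟨h, hh, hTsub, hTcard⟩ := (hsh (r+1) T).1 (hG2def ▸ hT)
      have hTne : T.Nonempty := by
        rw [← card_pos, hTcard]; omega
      have hpm : pick T ∈ T := hpickmem T hTne
      rw [mem_sigma]
      constructor
      · rw [hPR, mem_powersetCard]
        refine ⟨subset_univ _, ?_⟩
        rw [card_erase_of_mem hpm, hTcard]
        omega
      · rw [mem_biUnion]
        exact ⟨h, mem_filter.2 ⟨hh, (erase_subset _ _).trans hTsub⟩, hTsub hpm⟩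
    have hinj : Set.InjOn
        (fun T : Finset (Fin n) => (⟨T.erase (pick T), pick T⟩ : Σ _ : Finset (Fin n), Fin n))
        ↑G2 := by
      intro T1 hT1 T2 hT2 he
      rw [mem_coe] at hT1 hT2
      obtain ⟨h1x, hh1, hs1, hc1⟩ := (hsh (r+1) T1).1 (hG2def ▸ hT1)
      obtain ⟨h2x, hh2, hs2, hc2⟩ := (hsh (r+1) T2).1 (hG2def ▸ hT2)
      have hne1 : T1.Nonempty := by rw [← card_pos, hc1]; omega
      have hne2 : T2.Nonempty := by rw [← card_pos, hc2]; omega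
      have h1 := congrArg (fun s : (Σ _ : Finset (Fin n), Fin n) => s.1) he
      have h2 := congrArg (fun s : (Σ _ : Finset (Fin n), Fin n) => s.2) he
      simp only at h1 h2
      have e1' : T1 = insert (pick T1) (T1.erase (pick T1)) :=
        (insert_erase (hpickmem T1 hne1)).symm
      rw [e1', h1, h2, insert_erase (hpickmem T2 hne2)]
    calc G2.card ≤ (PR.sigma (fun g => (H.filter fun h => g ⊆ h).biUnion id)).card :=
          card_le_card_of_injOn _ hmaps hinj
      _ = ∑ g ∈ PR, ((H.filter fun h => g ⊆ h).biUnion id).card := card_sigma _ _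
      _ ≤ ∑ g ∈ PR, ∑ h ∈ H.filter (fun h => g ⊆ h), h.card :=
          Finset.sum_le_sum fun g _ => card_biUnion_le
  -- per-pair bound
  have hpairb : ∀ e1 ∈ F, ∀ e2 ∈ F,
      ((univ : Finset (α → Fin n)).filter (fun φ => Function.Injective φ ∧ e1 ≠ e2 ∧
        ∃ h ∈ H, (e1 ∪ e2).image φ ⊆ h)).card
      ≤ (r+1)^(r+1) * n^(k-(r+1)) * G2.card := by
    intro e1 he1 e2 he2
    by_cases h12 : e1 = e2
    · have hemp : ((univ : Finset (α → Fin n)).filter (fun φ => Function.Injective φ ∧ e1 ≠ e2 ∧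
          ∃ h ∈ H, (e1 ∪ e2).image φ ⊆ h)) = ∅ := by
        rw [Finset.filter_eq_empty_iff]
        rintro φ - ⟨-, hne, -⟩
        exact hne h12
      rw [hemp]
      simp
    · have hu : r + 1 ≤ (e1 ∪ e2).card := hunion_card e1 he1 e2 he2 h12
      obtain ⟨T0, hT0sub, hT0card⟩ := Finset.exists_subset_card_eq hu
      set s := ((univ : Finset (α → Fin n)).filter (fun φ => Function.Injective φ ∧ e1 ≠ e2 ∧
        ∃ h ∈ H, (e1 ∪ e2).image φ ⊆ h)) with hs
      have himgsub : s.image (fun φ => T0.image φ) ⊆ G2 := by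
        intro T hT
        obtain ⟨φ, hφ, rfl⟩ := mem_image.1 hT
        rw [hs, mem_filter] at hφ
        obtain ⟨-, hinj, -, h, hh, hsub⟩ := hφ
        rw [hG2def]
        apply (hsh (r+1) _).2
        refine ⟨h, hh, (image_subset_image hT0sub).trans hsub, ?_⟩
        rw [card_image_of_injective _ hinj, hT0card]
      have h1 : s.card ≤ ((r+1)^(r+1) * n^(k-(r+1))) * (s.image (fun φ => T0.image φ)).card := by
        apply card_le_mul_card_image
        intro T hT
        obtain ⟨φ0, hφ0, hT0im⟩ := mem_image.1 hT
        have hφ0' := (mem_filter.1 hφ0).2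
        have hTcard : T.card = r + 1 := by
          rw [← hT0im, card_image_of_injective _ hφ0'.1, hT0card]
        have hfib : s.filter (fun φ => T0.image φ = T) ⊆
            (univ : Finset (α → Fin n)).filter (fun φ => ∀ x ∈ T0, φ x ∈ T) := by
          intro φ hφ
          rw [mem_filter] at hφ ⊢
          refine ⟨mem_univ _, fun x hx => ?_⟩
          rw [← hφ.2]
          exact mem_image_of_mem _ hx
        calc (s.filter (fun φ => T0.image φ = T)).card
            ≤ ((univ : Finset (α → Fin n)).filter (fun φ => ∀ x ∈ T0, φ x ∈ T)).card :=
              card_le_card hfib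
          _ ≤ T.card ^ T0.card * n ^ (Fintype.card α - T0.card) := count_maps T0 T
          _ = (r+1)^(r+1) * n^(k-(r+1)) := by rw [hTcard, hT0card, ← hkdef]
      calc s.card ≤ ((r+1)^(r+1) * n^(k-(r+1))) * (s.image (fun φ => T0.image φ)).card := h1
        _ ≤ ((r+1)^(r+1) * n^(k-(r+1))) * G2.card :=
            Nat.mul_le_mul_left _ (card_le_card himgsub)
        _ = (r+1)^(r+1) * n^(k-(r+1)) * G2.card := by ring
  -- assembling the Bad bound
  have hBadcard : Bad.card ≤ m^2 * ((r+1)^(r+1) * n^(k-(r+1)) * G2.card) := by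
    have hBadsub : Bad ⊆ (F ×ˢ F).biUnion (fun p =>
        (univ : Finset (α → Fin n)).filter (fun φ => Function.Injective φ ∧ p.1 ≠ p.2 ∧
          ∃ h ∈ H, (p.1 ∪ p.2).image φ ⊆ h)) := by
      intro φ hφ
      rw [hBadDef, mem_filter] at hφ
      obtain ⟨-, hinj, e1, he1, e2, he2, hne, hh⟩ := hφ
      exact mem_biUnion.2 ⟨(e1, e2), mem_product.2 ⟨he1, he2⟩,
        mem_filter.2 ⟨mem_univ _, hinj, hne, hh⟩⟩
    calc Bad.card ≤ ((F ×ˢ F).biUnion (fun p =>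
          (univ : Finset (α → Fin n)).filter (fun φ => Function.Injective φ ∧ p.1 ≠ p.2 ∧
            ∃ h ∈ H, (p.1 ∪ p.2).image φ ⊆ h))).card := card_le_card hBadsub
      _ ≤ ∑ p ∈ F ×ˢ F, ((univ : Finset (α → Fin n)).filter
            (fun φ => Function.Injective φ ∧ p.1 ≠ p.2 ∧
              ∃ h ∈ H, (p.1 ∪ p.2).image φ ⊆ h)).card := card_biUnion_le
      _ ≤ ∑ _p ∈ F ×ˢ F, (r+1)^(r+1) * n^(k-(r+1)) * G2.card :=
          Finset.sum_le_sum fun p hp =>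
            hpairb p.1 (mem_product.1 hp).1 p.2 (mem_product.1 hp).2
      _ = (F ×ˢ F).card * ((r+1)^(r+1) * n^(k-(r+1)) * G2.card) := by
          rw [Finset.sum_const, smul_eq_mul]
      _ = m^2 * ((r+1)^(r+1) * n^(k-(r+1)) * G2.card) := by
          rw [card_product, ← hmdef]
          ring
  -- pass to the reals
  have hδn : (0:ℝ) ≤ δ * n := by positivity
  have hSreal : ((∑ g ∈ PR, ∑ h ∈ H.filter (fun h => g ⊆ h), h.card : ℕ) : ℝ)
      ≤ δ * n * ((∑ g ∈ PR, mult g : ℕ) : ℝ) := by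
    push_cast
    calc ∑ g ∈ PR, ∑ h ∈ H.filter (fun h => g ⊆ h), (h.card : ℝ)
        ≤ ∑ g ∈ PR, ∑ _h ∈ H.filter (fun h => g ⊆ h), (δ * n) :=
          Finset.sum_le_sum fun g _ => Finset.sum_le_sum fun h hh =>
            (hsize h (mem_filter.1 hh).1).2
      _ = ∑ g ∈ PR, ((mult g : ℝ)) * (δ * n) := by
          refine Finset.sum_congr rfl fun g _ => ?_
          rw [Finset.sum_const, nsmul_eq_mul]
      _ = δ * n * ∑ g ∈ PR, (mult g : ℝ) := by
          rw [← Finset.sum_mul]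
          ring
  have hG2real : (G2.card : ℝ) ≤ δ * n * ((k.choose r : ℝ) * ((m:ℝ) * (n:ℝ)^r)) := by
    calc (G2.card : ℝ) ≤ ((∑ g ∈ PR, ∑ h ∈ H.filter (fun h => g ⊆ h), h.card : ℕ) : ℝ) :=
          Nat.cast_le.2 hG2card
      _ ≤ δ * n * ((∑ g ∈ PR, mult g : ℕ) : ℝ) := hSreal
      _ ≤ δ * n * ((k.choose r * (m * n ^ r) : ℕ) : ℝ) :=
          mul_le_mul_of_nonneg_left (Nat.cast_le.2 hIbound) hδn
      _ = δ * n * ((k.choose r : ℝ) * ((m:ℝ) * (n:ℝ)^r)) := by push_cast; ring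
  have hfin1 : copyCount F (rShadow r H) ≤ m^2 * ((r+1)^(r+1) * n^(k-(r+1)) * G2.card) :=
    le_trans step1 hBadcard
  calc (copyCount F (rShadow r H) : ℝ)
      ≤ ((m^2 * ((r+1)^(r+1) * n^(k-(r+1)) * G2.card) : ℕ) : ℝ) := Nat.cast_le.2 hfin1
    _ = (m:ℝ)^2 * ((r+1:ℝ)^(r+1) * (n:ℝ)^(k-(r+1)) * (G2.card : ℝ)) := by push_cast; ring
    _ ≤ (m:ℝ)^2 * ((r+1:ℝ)^(r+1) * (n:ℝ)^(k-(r+1)) *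
          (δ * n * ((k.choose r : ℝ) * ((m:ℝ) * (n:ℝ)^r)))) := by
        gcongr
    _ = ((C1:ℝ) * δ) * ((n:ℝ)^(k-(r+1)) * (n:ℝ) * (n:ℝ)^r) := by
        rw [hC1]
        push_cast
        ring
    _ = ((C1:ℝ) * δ) * (n:ℝ)^k := by
        have hexp : k - (r+1) + 1 + r = k := by omega
        rw [show (n:ℝ)^(k-(r+1)) * (n:ℝ) * (n:ℝ)^r = (n:ℝ)^(k-(r+1)+1+r) by
          rw [pow_add, pow_add, pow_one], hexp]
    _ ≤ ε * (n:ℝ)^k := by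
        have h1 : (C1:ℝ)/((C1:ℝ)+1) ≤ 1 := by
          rw [div_le_one (by positivity)]
          linarith
        have hle : (C1:ℝ) * δ ≤ ε := by
          rw [hδ]
          calc (C1:ℝ) * (ε / ((C1:ℝ)+1)) = ε * ((C1:ℝ)/((C1:ℝ)+1)) := by ring
            _ ≤ ε * 1 := by nlinarith
            _ = ε := mul_one ε
        have hnk : (0:ℝ) ≤ (n:ℝ)^k := by positivity
        exact mul_le_mul_of_nonneg_right hle hnk
end

section
/- Let F be an r-graph with at least two hyperedges and let H be a Berge-F-free hypergraph. Then every copy of F in the r-shadow Γ^(r)(H) contains two distinct r-edges that are both contained in a common hyperedge of H. -/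
open Finset

theorem statement16 {α β : Type*} [DecidableEq α] [DecidableEq β] (r : ℕ)
    (F : Finset (Finset α)) (hF : ∀ e ∈ F, e.card = r) (hF2 : 2 ≤ F.card)
    (H : Finset (Finset β)) (hfree : ¬ ContainsBerge F H)
    (φ : α → β) (hφ : Function.Injective φ)
    (hcopy : ∀ e ∈ F, e.image φ ∈ rShadow r H) :
    ∃ e₁ ∈ F, ∃ e₂ ∈ F, e₁.image φ ≠ e₂.image φ ∧
      ∃ h ∈ H, e₁.image φ ⊆ h ∧ e₂.image φ ⊆ h := by
  by_contra hcon
  push_neg at hcon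
  have key : ∀ e ∈ F, ∃ h, h ∈ H ∧ e.image φ ⊆ h := by
    intro e he
    have := hcopy e he
    simp only [rShadow, Finset.mem_biUnion, Finset.mem_powersetCard] at this
    obtain ⟨h, hh, hsub, -⟩ := this
    exact ⟨h, hh, hsub⟩
  choose! f hf1 hf2 using key
  apply hfree
  refine ⟨φ, f, hφ, ?_, hf1, hf2⟩
  intro e₁ h₁ e₂ h₂ heq
  by_contra hne
  have himg : e₁.image φ ≠ e₂.image φ := fun h =>
    hne (Finset.image_injective hφ h)
  exact hcon e₁ h₁ e₂ h₂ himg (f e₁) (hf1 e₁ h₁) (hf2 e₁ h₁)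
    (heq ▸ hf2 e₂ h₂)
end

section
/- Let r ≥ k ≥ 2, let F be a k-graph, and let G be an F-free k-graph on a vertex set V. Let H be the r-graph on V whose hyperedges are exactly those r-element subsets S of V such that every k-element subset of S is a hyperedge of G (i.e., S spans a copy of K_r^(k) in G). Then H is Berge-F-free. -/
open Finset

theorem statement18 {α β : Type*} [DecidableEq α] [DecidableEq β] [Fintype β]
    (k r : ℕ) (hk : 2 ≤ k) (hkr : k ≤ r)
    (F : Finset (Finset α)) (hF : ∀ e ∈ F, e.card = k)
    (G : Finset (Finset β)) (hG : ∀ e ∈ G, e.card = k) (hGfree : ¬ CopyIn F G) :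
    ¬ ContainsBerge F
      (((Finset.univ : Finset β).powersetCard r).filter
        (fun S => ∀ e ∈ S.powersetCard k, e ∈ G)) := by
  rintro ⟨φ, f, hφ, _, hfH, hsub⟩
  apply hGfree
  refine ⟨φ, hφ, fun e he => ?_⟩
  have hfe := hfH e he
  simp only [mem_filter] at hfe
  exact hfe.2 _ (by
    rw [mem_powersetCard]
    exact ⟨hsub e he, by rw [card_image_of_injective _ hφ, hF e he]⟩)
end
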